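/- In the cyclotomic degenerate affine Hecke algebra H(Λ), for each r and each i with i_r = 0, the generator t_r commutes with the idempotent e(i): t_r e(i) = e(i) t_r. -/
import Mathlib

open MvPolynomial Finset

private lemma AB_kill {H : Type*} [Ring H] {A B E : H} (hAB : Commute A B)
    {p q : ℕ} (hA : A ^ p * E = 0) (hB : B ^ q * E = 0)
    (k j : ℕ) (h : p ≤ k ∨ q ≤ j) : A ^ k * (B ^ j * E) = 0 := by
  rcases h with h | h
  · obtain ⟨d, rfl⟩ : ∃ d, k = d + p := ⟨k - p, by omega⟩
    have hswap : A ^ p * (B ^ j * E) = B ^ j * (A ^ p * E) := by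
      rw [← mul_assoc, (hAB.pow_pow p j).eq, mul_assoc]
    rw [pow_add, mul_assoc, hswap, hA, mul_zero, mul_zero]
  · obtain ⟨d, rfl⟩ : ∃ d, j = d + q := ⟨j - q, by omega⟩
    rw [pow_add, mul_assoc, hB, mul_zero, mul_zero]

private lemma key {k : Type*} [Field k] {n : ℕ}
    {H : Type*} [Ring H] [Algebra k H]
    (x : Fin n → H) (t : H) (r : Fin n) (α : ℤ)
    (σ : MvPolynomial (Fin n) k →ₐ[k] MvPolynomial (Fin n) k)
    (hσr : σ (X r) = - X r)
    (D : MvPolynomial (Fin n) k → MvPolynomial (Fin n) k)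
    (hD : ∀ f, X r * D f = σ f - f)
    (π : MvPolynomial (Fin n) k →ₐ[k] H)
    (hπ : ∀ s, π (X s) = x s)
    (ht : ∀ f, t * π f = π (σ f) * t + π (D f))
    (E : H) (hcomm : ∀ g, E * π g = π g * E)
    (s : Fin n) (c : k) (hσs : σ (X s) = X s - α • X r)
    (Ms Mr : ℕ)
    (hMs : (x s - algebraMap k H c) ^ Ms * E = 0)
    (hMr : x r ^ Mr * E = 0) :
    ∃ m, (x s - algebraMap k H c) ^ m * (t * E) = 0 ∧
      (E * t) * (x s - algebraMap k H c) ^ m = 0 := by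
  classical
  set A := x s - algebraMap k H c with hAdef
  set P : MvPolynomial (Fin n) k := X s - C c with hPdef
  set Q : MvPolynomial (Fin n) k := P - (α : MvPolynomial (Fin n) k) * X r with hQdef
  set m := Ms + Mr with hm
  -- basic facts about `σ` and `π`
  have hσC : σ (C c) = C c := by
    rw [← MvPolynomial.algebraMap_eq]; exact σ.commutes c
  have hπC : π (C c) = algebraMap k H c := by
    rw [← MvPolynomial.algebraMap_eq]; exact π.commutes c
  have hπP : π P = A := by rw [hPdef, map_sub, hπ, hπC]
  have hσP : σ P = Q := by
    rw [hPdef, map_sub, hσs, hσC, hQdef, hPdef, zsmul_eq_mul]; ring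
  have hσQ : σ Q = P := by
    rw [hQdef, map_sub, hσP, map_mul, hσr, map_intCast]; ring
  -- binomial expansion of Q ^ m
  have hQm : Q ^ m = ∑ k1 ∈ range (m + 1),
      ((-(α : MvPolynomial (Fin n) k)) ^ (m - k1) * (m.choose k1 : MvPolynomial (Fin n) k))
        * (P ^ k1 * (X r) ^ (m - k1)) := by
    have h0 : Q = P + (-((α : MvPolynomial (Fin n) k) * X r)) := by rw [hQdef]; ring
    rw [h0, add_pow]
    exact Finset.sum_congr rfl fun k1 _ => by ring
  -- the quotient polynomial q with X r * q = P^m - Q^m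
  set q : MvPolynomial (Fin n) k := ∑ k1 ∈ range m,
      (-((-(α : MvPolynomial (Fin n) k)) ^ (m - k1) * (m.choose k1 : MvPolynomial (Fin n) k)))
        * (P ^ k1 * (X r) ^ (m - 1 - k1)) with hqdef
  have hRq : P ^ m - Q ^ m = X r * q := by
    rw [hQm, Finset.sum_range_succ, Nat.sub_self, pow_zero, Nat.choose_self, Nat.cast_one,
      mul_one, one_mul, pow_zero, mul_one, hqdef, Finset.mul_sum]
    rw [show ∀ S T : MvPolynomial (Fin n) k, P ^ m - (S + P ^ m) = -S from fun S T => by ring]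
    · rw [← Finset.sum_neg_distrib]
      refine Finset.sum_congr rfl fun k1 hk1 => ?_
      have h1 : m - k1 = (m - 1 - k1) + 1 := by
        have := Finset.mem_range.mp hk1; omega
      rw [h1, pow_succ]; ring
    · exact 0
  have hXne : (X r : MvPolynomial (Fin n) k) ≠ 0 := MvPolynomial.X_ne_zero r
  have hDQ : D (Q ^ m) = q := by
    refine mul_left_cancel₀ hXne ?_
    rw [hD, map_pow, hσQ, hRq]
  have hDP : D (P ^ m) = -q := by
    refine mul_left_cancel₀ hXne ?_
    rw [hD, map_pow, hσP, mul_neg, ← hRq]; ring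
  -- commutation in H
  have hxx : Commute (x s) (x r) := by
    have h2 := (Commute.all (X s : MvPolynomial (Fin n) k) (X r)).map π
    rwa [hπ, hπ] at h2
  have hABc : Commute A (x r) := Commute.sub_left hxx (Algebra.commutes c (x r))
  -- the two vanishing statements
  have zero1 : π (Q ^ m) * E = 0 := by
    rw [hQm, map_sum, Finset.sum_mul]
    refine Finset.sum_eq_zero fun k1 hk1 => ?_
    have hk1' := Finset.mem_range.mp hk1
    have hsplit : Ms ≤ k1 ∨ Mr ≤ m - k1 := by omega
    simp only [map_mul, map_pow, hπP, hπ, mul_assoc]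
    rw [AB_kill hABc hMs hMr k1 (m - k1) hsplit, mul_zero, mul_zero]
  have zero2 : π q * E = 0 := by
    rw [hqdef, map_sum, Finset.sum_mul]
    refine Finset.sum_eq_zero fun k1 hk1 => ?_
    have hk1' := Finset.mem_range.mp hk1
    have hsplit : Ms ≤ k1 ∨ Mr ≤ m - 1 - k1 := by omega
    simp only [map_mul, map_pow, map_neg, hπP, hπ, mul_assoc, neg_mul]
    rw [AB_kill hABc hMs hMr k1 (m - 1 - k1) hsplit, mul_zero, mul_zero, neg_zero]
  refine ⟨m, ?_, ?_⟩
  · -- left statement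
    have h1 : π (P ^ m) * t = t * π (Q ^ m) - π q := by
      have h2 := ht (Q ^ m)
      have hσQm : σ (Q ^ m) = P ^ m := by rw [map_pow, hσQ]
      rw [hσQm, hDQ] at h2
      rw [eq_sub_iff_add_eq]
      exact h2.symm
    calc A ^ m * (t * E) = (π (P ^ m) * t) * E := by
          rw [map_pow, hπP, mul_assoc]
      _ = t * (π (Q ^ m) * E) - π q * E := by rw [h1, sub_mul, mul_assoc]
      _ = 0 := by rw [zero1, zero2, mul_zero, sub_zero]
  · -- right statement
    have h2 := ht (P ^ m)
    have hσPm : σ (P ^ m) = Q ^ m := by rw [map_pow, hσP]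
    rw [hσPm, hDP] at h2
    have e1 : E * (π (Q ^ m) * t) = 0 := by
      rw [← mul_assoc, hcomm, zero1, zero_mul]
    have e2 : E * π (-q) = 0 := by
      rw [hcomm, map_neg, neg_mul, zero2, neg_zero]
    calc (E * t) * A ^ m = E * (t * π (P ^ m)) := by
          rw [map_pow, hπP, mul_assoc]
      _ = E * (π (Q ^ m) * t) + E * π (-q) := by rw [h2, mul_add]
      _ = 0 := by rw [e1, e2, add_zero]

theorem stmt_16 (k : Type*) [Field k] (n eN : ℕ) [NeZero eN]
    (ch : ZMod eN →+* k) (a : Fin n → Fin n → ℤ)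
    (H : Type*) [Ring H] [Algebra k H]
    (x : Fin n → H) (t : H) (r : Fin n) (harr : a r r = 2)
    (σ : MvPolynomial (Fin n) k →ₐ[k] MvPolynomial (Fin n) k)
    (hσ : ∀ s, σ (MvPolynomial.X s) =
      MvPolynomial.X s - (a s r) • MvPolynomial.X r)
    (D : MvPolynomial (Fin n) k → MvPolynomial (Fin n) k)
    (hD : ∀ f, MvPolynomial.X r * D f = σ f - f)
    (π : MvPolynomial (Fin n) k →ₐ[k] H)
    (hπ : ∀ s, π (MvPolynomial.X s) = x s)
    (ht : ∀ f, t * π f = π (σ f) * t + π (D f))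
    (e : (Fin n → ZMod eN) → H)
    (hidem : ∀ v, e v * e v = e v)
    (horth : ∀ v w, v ≠ w → e v * e w = 0)
    (hsum : ∑ v, e v = 1)
    (hxe : ∀ v s, x s * e v = e v * x s)
    (hmemL : ∀ (v : Fin n → ZMod eN) (h : H),
      e v * h = h ↔ ∀ s, ∃ m : ℕ, (x s - algebraMap k H (ch (v s))) ^ m * h = 0)
    (hmemR : ∀ (v : Fin n → ZMod eN) (h : H),
      h * e v = h ↔ ∀ s, ∃ m : ℕ, h * (x s - algebraMap k H (ch (v s))) ^ m = 0)
    (i : Fin n → ZMod eN) (hi : i r = 0) :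
    t * e i = e i * t := by
  have hcomm : ∀ g, e i * π g = π g * e i := by
    intro g
    induction g using MvPolynomial.induction_on with
    | C c' =>
      rw [← MvPolynomial.algebraMap_eq, π.commutes]
      exact (Algebra.commutes c' (e i)).symm
    | add f g hf hg =>
      rw [map_add, mul_add, add_mul, hf, hg]
    | mul_X f s' hf =>
      rw [map_mul, hπ, ← mul_assoc, hf, mul_assoc, ← hxe i s', ← mul_assoc]
  have hnil := (hmemL i (e i)).mp (hidem i)
  have hσr : σ (MvPolynomial.X r) = - MvPolynomial.X r := by
    rw [hσ r, harr, two_zsmul]; ring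
  obtain ⟨Mr, hMr⟩ : ∃ m, x r ^ m * e i = 0 := by
    obtain ⟨m, hm⟩ := hnil r
    refine ⟨m, ?_⟩
    rwa [hi, map_zero, map_zero, sub_zero] at hm
  have key' : ∀ s, ∃ m, (x s - algebraMap k H (ch (i s))) ^ m * (t * e i) = 0 ∧
      (e i * t) * (x s - algebraMap k H (ch (i s))) ^ m = 0 := by
    intro s
    obtain ⟨Ms, hMs⟩ := hnil s
    exact key x t r (a s r) σ hσr D hD π hπ ht (e i) hcomm s (ch (i s)) (hσ s) Ms Mr hMs hMr
  have hL : e i * (t * e i) = t * e i :=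
    (hmemL i (t * e i)).mpr fun s => (key' s).imp fun m h => h.1
  have hR : (e i * t) * e i = e i * t :=
    (hmemR i (e i * t)).mpr fun s => (key' s).imp fun m h => h.2
  calc t * e i = e i * (t * e i) := hL.symm
    _ = (e i * t) * e i := by rw [mul_assoc]
    _ = e i * t := hR
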